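/- Type I winning condition for Blue: let the board contain only empty piles, singletons, and at most one long r-pile and no long b-piles (a type I board). If Blue is the active player with m_b blue chips and Red has n_r red chips with m_b > n_r ≥ 0, then Blue has a winning strategy; in fact the strategy S (capture all own-color piles discarding prisoners when possible, discard all prisoners, then place a blue chip on the longest red pile or an empty pile) wins for Blue. -/

import Mathlib

/-!  A model of the two-player, two-color endgame of *So Long Sucker*.

The two remaining players are Blue and Red, identified with their colors.
A pile is a finite sequence of chips (head = top chip).  A game state
records the board, the number of chips of each color held by each player,
and the active player. -/

/-- The two chip colors (also naming the two remaining players). -/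
inductive Color : Type
  | b : Color
  | r : Color
deriving DecidableEq, Repr

/-- The opponent's color. -/
def Color.other : Color → Color
  | Color.b => Color.r
  | Color.r => Color.b

/-- A pile of chips; the head of the list is the top chip. -/
abbrev Pile := List Color

/-- A game state: the board (a list of piles), the chip counts
`chips p c` = number of `c`-colored chips held by player `p`,
and the active player. -/
structure GState where
  board : List Pile
  chips : Color → Color → ℕ
  active : Color

/-- Total number of chips in player `p`'s possession. -/
def totalChips (s : GState) (p : Color) : ℕ :=
  s.chips p Color.b + s.chips p Color.r

/-- The Next Player Rule in the two-player, two-color endgame, as a function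
of the pile played on (before the placement) and the color of the placed
chip: if the placement triggers a capture, the capturing player moves next;
otherwise the player of the other color than the placed chip moves next
(this is the unique player allowed by the Next Player Rule). -/
def nextActive (π : Pile) (c : Color) : Color :=
  if π.head? = some c then c else c.other

/-- Placement of a chip of color `c` on pile number `i` by the active
player, with the Capture Rule and Next Player Rule applied. -/
inductive PlaceOn (i : ℕ) : GState → GState → Prop
  | noCapture (s : GState) (c : Color)
      (hi : i < s.board.length)
      (hc : 0 < s.chips s.active c)
      (hcap : (s.board.getD i []).head? ≠ some c) :
      PlaceOn i s
        { board := s.board.set i (c :: s.board.getD i []),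
          chips := fun p x =>
            s.chips p x - (if p = s.active ∧ x = c then 1 else 0),
          active := c.other }
  | capture (s : GState) (c : Color) (d : Color)
      (hi : i < s.board.length)
      (hc : 0 < s.chips s.active c)
      (hcap : (s.board.getD i []).head? = some c)
      (hd : d ∈ c :: s.board.getD i []) :
      PlaceOn i s
        { board := s.board.set i [],
          chips := fun p x =>
            (s.chips p x - (if p = s.active ∧ x = c then 1 else 0))
              + (if p = c then
                  (c :: s.board.getD i []).count x - (if d = x then 1 else 0)
                 else 0),
          active := c }

/-- One legal move of the active player: placing a chip on some pile
(resolving captures), discarding a prisoner, or donating a prisoner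
to the opponent. -/
inductive Step : GState → GState → Prop
  | place (i : ℕ) (s s' : GState) (h : PlaceOn i s s') : Step s s'
  | discardPrisoner (s : GState)
      (hc : 0 < s.chips s.active s.active.other) :
      Step s
        { board := s.board,
          chips := fun p x =>
            s.chips p x - (if p = s.active ∧ x = s.active.other then 1 else 0),
          active := s.active }
  | donatePrisoner (s : GState)
      (hc : 0 < s.chips s.active s.active.other) :
      Step s
        { board := s.board,
          chips := fun p x =>
            if x = s.active.other then
              (if p = s.active then s.chips p x - 1 else s.chips p x + 1)
            else s.chips p x,
          active := s.active }

/-- Player `p` has a winning strategy from state `s`: either the opponent is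
to move with no chips (and `p` refuses to donate), so the opponent is
eliminated and `p` wins; or it is `p`'s turn and some move of `p` leads to a
winning position; or it is the opponent's turn and every move of the opponent
leads to a position winning for `p`. -/
inductive WinsFor (p : Color) : GState → Prop
  | elim (s : GState) (h : s.active ≠ p) (h0 : totalChips s s.active = 0) :
      WinsFor p s
  | mine (s s' : GState) (h : s.active = p) (hs : Step s s')
      (hw : WinsFor p s') : WinsFor p s
  | theirs (s : GState) (h : s.active ≠ p) (h0 : 0 < totalChips s s.active)
      (hw : ∀ s', Step s s' → WinsFor p s') : WinsFor p s

/-- The index of the pile on which strategy `S` places its guard: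
the longest pile whose top chip has the opponent's color `q`,
or an empty pile if there is no `q`-pile. -/
def targetIdx (q : Color) (l : List Pile) : ℕ :=
  let opp := l.filter (fun π => π.head? == some q)
  if opp.isEmpty then
    l.findIdx (fun π => π.isEmpty)
  else
    l.findIdx (fun π =>
      (π.head? == some q) &&
        (π.length == (opp.map List.length).foldr Nat.max 0))

/-- The state resulting from the active player `p` playing one full round of
strategy `S`: capture every `p`-pile (discarding an opponent chip from a
captured pile when it contains one, and a `p` chip otherwise), discard all
prisoners, and finally place one guard on the longest opponent-colored pile,
or on an empty pile if there is none.  The turn then passes to the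
opponent. -/
def SRound (s : GState) : GState :=
  let p := s.active
  let q := p.other
  let capt := s.board.filter (fun π => π.head? == some p)
  let b1 := s.board.map (fun π => if π.head? == some p then ([] : Pile) else π)
  let g1 := s.chips p p +
      (capt.map (fun π =>
        if π.contains q then π.count p else π.count p - 1)).sum
  let i := targetIdx q b1
  { board := b1.set i (p :: b1.getD i []),
    chips := fun pl x =>
      if pl = p then (if x = p then g1 - 1 else 0) else s.chips pl x,
    active := q }

/-- Player `p` wins by applying strategy `S` at each of `p`'s rounds,
whatever the opponent plays. -/
inductive WinsWithS (p : Color) : GState → Prop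
  | elim (s : GState) (h : s.active ≠ p) (h0 : totalChips s s.active = 0) :
      WinsWithS p s
  | mine (s : GState) (h : s.active = p) (hg : 0 < s.chips p p)
      (hw : WinsWithS p (SRound s)) : WinsWithS p s
  | theirs (s : GState) (h : s.active ≠ p) (h0 : 0 < totalChips s s.active)
      (hw : ∀ s', Step s s' → WinsWithS p s') : WinsWithS p s

/-- Every pile on the board is an alternating sequence of colors. -/
def Alternating (l : List Pile) : Prop := ∀ π ∈ l, π.Chain' (· ≠ ·)

/-- The long piles (length at least 2) whose top chip has color `c`. -/
def longPiles (c : Color) (l : List Pile) : List Pile :=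
  l.filter (fun π => decide (2 ≤ π.length) && (π.head? == some c))

/-- The sum, over all long `c`-piles, of the number of `c` chips they
contain (e.g. `Σᵢ |ρᵢ|_r` for `c = r`). -/
def longSum (c : Color) (l : List Pile) : ℕ :=
  ((longPiles c l).map (fun π => π.count c)).sum

/-- The maximum, over all long `c`-piles, of the number of `c` chips they
contain (`0` if there is no long `c`-pile). -/
def longMax (c : Color) (l : List Pile) : ℕ :=
  ((longPiles c l).map (fun π => π.count c)).foldr Nat.max 0

/-- The total number of chips in the game (in hands and on the board). -/
def chipCount (s : GState) : ℕ :=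
  totalChips s Color.b + totalChips s Color.r + (s.board.map List.length).sum

section SLSAux

open List

lemma le_foldr_max {a : ℕ} {L : List ℕ} (h : a ∈ L) : a ≤ L.foldr Nat.max 0 := by
  induction L with
  | nil => cases h
  | cons x t ih =>
    rcases List.mem_cons.1 h with rfl | h
    · exact Nat.le_max_left _ _
    · exact le_trans (ih h) (Nat.le_max_right _ _)

lemma foldr_max_mem (L : List ℕ) (h : L.foldr Nat.max 0 ≠ 0) : L.foldr Nat.max 0 ∈ L := by
  induction L with
  | nil => simp at h
  | cons x t ih =>
    simp only [List.foldr_cons] at h ⊢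
    rcases Nat.le_total x (t.foldr Nat.max 0) with hle | hle
    · have hx : x.max (t.foldr Nat.max 0) = t.foldr Nat.max 0 := Nat.max_eq_right hle
      rw [hx] at h ⊢
      exact List.mem_cons_of_mem _ (ih h)
    · have hx : x.max (t.foldr Nat.max 0) = x := Nat.max_eq_left hle
      rw [hx]
      exact List.mem_cons_self

lemma filter_decomp {α} (p : α → Bool) (l : List α) (i : ℕ) (hi : i < l.length) :
    l.filter p = (l.take i).filter p ++ (if p l[i] = true then [l[i]] else [])
      ++ (l.drop (i+1)).filter p := by
  conv_lhs => rw [← List.take_append_drop i l, List.drop_eq_getElem_cons hi]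
  rw [List.filter_append, List.filter_cons]
  by_cases hp : p l[i] = true <;> simp [hp]

lemma filter_set_decomp {α} (p : α → Bool) (l : List α) (i : ℕ) (a : α) (hi : i < l.length) :
    (l.set i a).filter p = (l.take i).filter p ++ (if p a = true then [a] else [])
      ++ (l.drop (i+1)).filter p := by
  rw [List.set_eq_take_append_cons_drop, if_pos hi, List.filter_append, List.filter_cons]
  by_cases hp : p a = true <;> simp [hp]

lemma eq_singleton_of_head (π : Pile) (c : Color) (hh : π.head? = some c) (hl : π.length ≤ 1) :
    π = [c] := by
  match π with
  | [] => simp at hh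
  | [x] => simp_all
  | x :: y :: t => simp at hl

end SLSAux
section SLSAux2

/-- Red's total holdings. -/
def RedTot (s : GState) : ℕ := s.chips Color.r Color.b + s.chips Color.r Color.r

/-- Number of red-topped piles. -/
def rtops (l : List Pile) : ℕ := (l.filter (fun π => π.head? == some Color.r)).length

/-- Termination measure. -/
def mu (s : GState) : ℕ :=
  (s.board.length + 2) * RedTot s +
    (if s.active = Color.r then rtops s.board + 1 else s.board.length + 2)

/-- Invariant at Blue's turn. -/
def IB (s : GState) : Prop :=
  s.active = Color.b ∧ (longPiles Color.r s.board).length ≤ 1 ∧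
    s.chips Color.r Color.r < s.chips Color.b Color.b

/-- Invariant at Red's turn. -/
def JR (s : GState) : Prop :=
  s.active = Color.r ∧ longPiles Color.r s.board = [] ∧
    s.chips Color.r Color.r ≤ s.chips Color.b Color.b

lemma arith1 {L k k' A B : ℕ} (hk : k' < k) (hA : A ≤ L) (hB : 1 ≤ B) :
    L * k' + A < L * k + B :=
  calc L * k' + A ≤ L * k' + L := by omega
    _ = L * (k' + 1) := by ring
    _ ≤ L * k := Nat.mul_le_mul_left _ hk
    _ < L * k + B := by omega

lemma rtops_le (l : List Pile) : rtops l ≤ l.length := List.length_filter_le _ _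

lemma longPiles_nil_iff (l : List Pile) :
    longPiles Color.r l = [] ↔
      ∀ π ∈ l, ¬ (2 ≤ π.length ∧ π.head? = some Color.r) := by
  rw [longPiles, List.filter_eq_nil_iff]
  constructor <;> intro h π hm <;> have := h π hm <;> simpa using this

lemma set_keeps_nil {l : List Pile} (h : longPiles Color.r l = []) (i : ℕ) (a : Pile)
    (hA : ¬ (2 ≤ a.length ∧ a.head? = some Color.r)) :
    longPiles Color.r (l.set i a) = [] := by
  rw [longPiles_nil_iff]
  intro π hm
  rcases List.mem_or_eq_of_mem_set hm with h' | h'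
  · exact (longPiles_nil_iff l).1 h π h'
  · subst h'; exact hA

lemma set_le_one {l : List Pile} (h : longPiles Color.r l = []) {i : ℕ} (hi : i < l.length)
    (a : Pile) : (longPiles Color.r (l.set i a)).length ≤ 1 := by
  rw [longPiles, filter_set_decomp _ l i a hi]
  have h1 : (l.take i).filter (fun π => decide (2 ≤ π.length) && (π.head? == some Color.r)) = [] := by
    rw [List.filter_eq_nil_iff]
    intro π hm
    have := (longPiles_nil_iff l).1 h π (List.mem_of_mem_take hm)
    simpa using this
  have h2 : (l.drop (i+1)).filter (fun π => decide (2 ≤ π.length) && (π.head? == some Color.r)) = [] := by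
    rw [List.filter_eq_nil_iff]
    intro π hm
    have := (longPiles_nil_iff l).1 h π (List.mem_of_mem_drop hm)
    simpa using this
  rw [h1, h2]
  split <;> simp

lemma rtops_set_nil {l : List Pile} {i : ℕ} (hi : i < l.length)
    (hr : l[i].head? = some Color.r) :
    rtops (l.set i ([] : Pile)) + 1 = rtops l := by
  rw [rtops, rtops, filter_set_decomp _ l i _ hi, filter_decomp _ l i hi]
  have h1 : ((([] : Pile).head? == some Color.r)) = false := by simp
  have h2 : ((l[i].head? == some Color.r)) = true := by simp [hr]
  rw [h1, h2]
  simp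
  omega

end SLSAux2
section SLSAux3

lemma core (l : List Pile) (hl : (longPiles Color.r l).length ≤ 1) (x : Pile) :
    longPiles Color.r (l.set (targetIdx Color.r l) (Color.b :: x)) = [] := by
  rcases eq_or_ne (longPiles Color.r l) [] with hnil | hne
  · exact set_keeps_nil hnil _ _ (by simp)
  · -- there is a long r-pile π₀
    obtain ⟨π₀, hπ₀mem⟩ : ∃ π₀, π₀ ∈ longPiles Color.r l := by
      cases h : longPiles Color.r l with
      | nil => exact absurd h hne
      | cons a t => exact ⟨a, h ▸ (List.mem_cons_self : a ∈ a :: t)⟩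
    rw [longPiles, List.mem_filter] at hπ₀mem
    obtain ⟨hπ₀l, hπ₀p⟩ := hπ₀mem
    have hπ₀len : 2 ≤ π₀.length := by
      have := hπ₀p; simp at this; exact this.1
    have hπ₀hd : π₀.head? = some Color.r := by
      have := hπ₀p; simp at this; exact this.2
    set opp := l.filter (fun π => π.head? == some Color.r) with hopp
    have hπ₀opp : π₀ ∈ opp := by
      rw [hopp, List.mem_filter]; exact ⟨hπ₀l, by simp [hπ₀hd]⟩
    set M := (opp.map List.length).foldr Nat.max 0 with hM
    have hMge : 2 ≤ M :=
      le_trans hπ₀len (le_foldr_max (List.mem_map_of_mem (f := List.length) hπ₀opp))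
    have hMmem : M ∈ opp.map List.length := foldr_max_mem _ (by omega)
    obtain ⟨π₁, hπ₁opp, hπ₁len⟩ := List.mem_map.1 hMmem
    obtain ⟨hπ₁l, hπ₁hd⟩ := List.mem_filter.1 hπ₁opp
    have hoppne : opp.isEmpty = false := by
      rw [List.isEmpty_eq_false_iff]
      exact List.ne_nil_of_mem hπ₀opp
    have hti : targetIdx Color.r l =
        l.findIdx (fun π => (π.head? == some Color.r) && (π.length == M)) := by
      rw [targetIdx, ← hopp, ← hM]
      simp [hoppne]
    set P : Pile → Bool := fun π => (π.head? == some Color.r) && (π.length == M) with hP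
    set i := l.findIdx P with hidef
    have hex : ∃ π ∈ l, P π = true := ⟨π₁, hπ₁l, by simp [hP, hπ₁len]; simpa using hπ₁hd⟩
    have hi : i < l.length := List.findIdx_lt_length_of_exists hex
    have hPi : P l[i] = true := List.findIdx_getElem (w := hi)
    have hhd : l[i].head? = some Color.r := by
      have := hPi; simp [hP] at this; exact this.1
    have hlen : l[i].length = M := by
      have := hPi; simp [hP] at this; exact this.2
    have hplong : (decide (2 ≤ l[i].length) && (l[i].head? == some Color.r)) = true := by
      simp [hhd, hlen]; omega
    -- decompose the filter of l at index i
    have hdec := filter_decomp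
      (fun π => decide (2 ≤ π.length) && (π.head? == some Color.r)) l i hi
    rw [longPiles, hdec, if_pos hplong] at hl
    simp only [List.length_append, List.length_cons] at hl
    have h1 : (l.take i).filter
        (fun π => decide (2 ≤ π.length) && (π.head? == some Color.r)) = [] := by
      rw [← List.length_eq_zero_iff]; simp at hl; omega
    have h2 : (l.drop (i+1)).filter
        (fun π => decide (2 ≤ π.length) && (π.head? == some Color.r)) = [] := by
      rw [← List.length_eq_zero_iff]; simp at hl; omega
    rw [hti, longPiles, filter_set_decomp _ l i _ hi, h1, h2]
    have hb : ((decide (2 ≤ (Color.b :: x).length)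
        && ((Color.b :: x).head? == some Color.r))) = false := by simp
    rw [hb]
    simp

end SLSAux3
section SLSAux4

lemma longPiles_map_blank (l : List Pile) :
    longPiles Color.r (l.map (fun π => if π.head? == some Color.b then ([] : Pile) else π))
      = longPiles Color.r l := by
  induction l with
  | nil => rfl
  | cons π t ih =>
    simp only [List.map_cons, longPiles, List.filter_cons] at ih ⊢
    by_cases hb : π.head? = some Color.b
    · have h1 : (if π.head? == some Color.b then ([] : Pile) else π) = [] := by simp [hb]
      rw [h1]
      have h2 : (decide (2 ≤ ([] : Pile).length) && (([] : Pile).head? == some Color.r)) = false := by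
        simp
      have h3 : (decide (2 ≤ π.length) && (π.head? == some Color.r)) = false := by
        simp [hb]
      rw [h2, h3]
      simpa using ih
    · have h1 : (if π.head? == some Color.b then ([] : Pile) else π) = π := by simp [hb]
      rw [h1]
      by_cases hp : (decide (2 ≤ π.length) && (π.head? == some Color.r)) = true
      · rw [if_pos hp, if_pos hp]; exact congrArg _ ih
      · rw [if_neg hp, if_neg hp]; exact ih

lemma mu_blue_step (l1 bd : List Pile) (hlen : l1.length = bd.length) (k : ℕ) :
    (l1.length + 2) * k + (rtops l1 + 1) < (bd.length + 2) * k + (bd.length + 2) := by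
  have h := rtops_le l1
  rw [hlen] at h ⊢
  exact Nat.add_lt_add_left (by omega) _

lemma JR_SRound (bd : List Pile) (ch : Color → Color → ℕ)
    (hl : (longPiles Color.r bd).length ≤ 1)
    (hch : ch Color.r Color.r < ch Color.b Color.b) :
    JR (SRound ⟨bd, ch, Color.b⟩) ∧ mu (SRound ⟨bd, ch, Color.b⟩) < mu ⟨bd, ch, Color.b⟩ := by
  have hb1 : (longPiles Color.r
      (bd.map (fun π => if π.head? == some Color.b then ([] : Pile) else π))).length ≤ 1 := by
    rw [longPiles_map_blank]; exact hl
  constructor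
  · refine ⟨rfl, ?_, ?_⟩
    · show longPiles Color.r (List.set _ _ _) = []
      exact core _ hb1 _
    · show ch Color.r Color.r ≤ _
      have : (SRound ⟨bd, ch, Color.b⟩).chips Color.b Color.b =
          (ch Color.b Color.b +
            ((List.filter (fun π => π.head? == some Color.b) bd).map (fun π =>
              if π.contains Color.r then π.count Color.b else π.count Color.b - 1)).sum) - 1 := by
        simp [SRound, Color.other]
      rw [this]
      omega
  · show (List.length (List.set _ _ _) + 2) * (ch Color.r Color.b + ch Color.r Color.r) +
        (rtops (List.set _ _ _) + 1) < _
    exact mu_blue_step _ _ (by simp) _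

end SLSAux4
section SLSAux5

lemma mu_lt_mu {l1 l2 : List Pile} {c1 c2 : Color → Color → ℕ} {a1 : Color}
    (hlen : l1.length = l2.length)
    (hle : c1 Color.r Color.b + c1 Color.r Color.r ≤ c2 Color.r Color.b + c2 Color.r Color.r)
    (hcase : (c1 Color.r Color.b + c1 Color.r Color.r < c2 Color.r Color.b + c2 Color.r Color.r)
      ∨ (a1 = Color.r ∧ rtops l1 < rtops l2)) :
    mu ⟨l1, c1, a1⟩ < mu ⟨l2, c2, Color.r⟩ := by
  have hA : (if a1 = Color.r then rtops l1 + 1 else l1.length + 2) ≤ l1.length + 2 := by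
    split
    · have := rtops_le l1; omega
    · exact le_refl _
  show (l1.length + 2) * (c1 Color.r Color.b + c1 Color.r Color.r) +
      (if a1 = Color.r then rtops l1 + 1 else l1.length + 2) <
    (l2.length + 2) * (c2 Color.r Color.b + c2 Color.r Color.r) +
      (if Color.r = Color.r then rtops l2 + 1 else l2.length + 2)
  rw [if_pos rfl, hlen] at *
  rcases hcase with hlt | ⟨ha, hr⟩
  · exact arith1 hlt hA (by omega)
  · rw [if_pos ha]
    exact Nat.add_lt_add_of_le_of_lt (Nat.mul_le_mul_left _ hle) (by omega)

lemma red_step {bd : List Pile} {ch : Color → Color → ℕ} {s' : GState}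
    (hlp : longPiles Color.r bd = [])
    (hch : ch Color.r Color.r ≤ ch Color.b Color.b)
    (hstep : Step ⟨bd, ch, Color.r⟩ s') :
    (IB s' ∨ JR s') ∧ mu s' < mu ⟨bd, ch, Color.r⟩ := by
  cases hstep with
  | discardPrisoner _ hc =>
    have hc' : 0 < ch Color.r Color.b := hc
    constructor
    · right
      refine ⟨rfl, hlp, ?_⟩
      simp [Color.other]
      omega
    · apply mu_lt_mu rfl <;> simp [Color.other] <;> omega
  | donatePrisoner _ hc =>
    have hc' : 0 < ch Color.r Color.b := hc
    constructor
    · right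
      refine ⟨rfl, hlp, ?_⟩
      simp [Color.other]
      omega
    · apply mu_lt_mu rfl <;> simp [Color.other] <;> omega
  | place i _ _ h =>
    cases h with
    | noCapture c hi hc hcap =>
      cases c with
      | r =>
        have hc' : 0 < ch Color.r Color.r := hc
        constructor
        · left
          refine ⟨rfl, set_le_one hlp hi _, ?_⟩
          simp [Color.other]
          omega
        · apply mu_lt_mu (by simp) <;> simp [Color.other] <;> omega
      | b =>
        have hc' : 0 < ch Color.r Color.b := hc
        constructor
        · right
          refine ⟨rfl, set_keeps_nil hlp i _ (by simp), ?_⟩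
          simp [Color.other]
          omega
        · apply mu_lt_mu (by simp) <;> simp [Color.other] <;> omega
    | capture c d hi hc hcap hd =>
      cases c with
      | r =>
        have hc' : 0 < ch Color.r Color.r := hc
        have hgd : bd.getD i [] = bd[i] := List.getD_eq_getElem bd [] hi
        have hsome : bd[i]? = some bd[i] := List.getElem?_eq_getElem hi
        have hhd : bd[i].head? = some Color.r := by rw [← hgd]; exact hcap
        have hnl : ¬(2 ≤ bd[i].length ∧ bd[i].head? = some Color.r) :=
          (longPiles_nil_iff bd).1 hlp _ (bd.getElem_mem hi)
        have hlen1 : bd[i].length ≤ 1 := by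
          by_contra hgt
          exact hnl ⟨by omega, hhd⟩
        have hπi : bd[i] = [Color.r] := eq_singleton_of_head _ _ hhd hlen1
        have hdr : d = Color.r := by
          rw [hgd, hπi] at hd
          simpa using hd
        subst hdr
        have hr1 : rtops (bd.set i ([] : Pile)) + 1 = rtops bd := rtops_set_nil hi hhd
        constructor
        · right
          refine ⟨rfl, set_keeps_nil hlp i _ (by simp), ?_⟩
          simp [Color.other, hsome, hπi, List.count_cons, List.count_nil]
          omega
        · apply mu_lt_mu (by simp)
          · simp [Color.other, hsome, hπi, List.count_cons, List.count_nil]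
            omega
          · right
            refine ⟨rfl, ?_⟩
            show rtops (bd.set i ([] : Pile)) < rtops bd
            omega
      | b =>
        have hc' : 0 < ch Color.r Color.b := hc
        have hgd : bd.getD i [] = bd[i] := List.getD_eq_getElem bd [] hi
        have hsome : bd[i]? = some bd[i] := List.getElem?_eq_getElem hi
        have hhd : bd[i].head? = some Color.b := by rw [← hgd]; exact hcap
        have hbmem : Color.b ∈ bd[i] := List.mem_of_mem_head? (by rw [hhd]; rfl)
        have hcount : 0 < bd[i].count Color.b := List.count_pos_iff.2 hbmem
        constructor
        · left
          refine ⟨rfl, ?_, ?_⟩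
          · rw [set_keeps_nil hlp i ([] : Pile) (by simp)]
            simp
          · by_cases hdb : d = Color.b <;>
              simp [Color.other, hsome, List.count_cons, hdb] <;> omega
        · apply mu_lt_mu (by simp) <;>
            by_cases hdb : d = Color.b <;>
            simp [Color.other, hsome, List.count_cons, hdb] <;> omega

end SLSAux5
section SLSMain

lemma main_ind : ∀ N s, mu s < N → (IB s ∨ JR s) → WinsWithS Color.b s := by
  intro N
  induction N with
  | zero => intro s h _; exact absurd h (Nat.not_lt_zero _)
  | succ N ih =>
    intro s hmu hinv
    obtain ⟨bd, ch, ac⟩ := s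
    rcases hinv with ⟨ha, hl, hch⟩ | ⟨ha, hlp, hch⟩
    · -- Blue's turn: play strategy S
      have hac : ac = Color.b := ha
      subst hac
      refine WinsWithS.mine _ rfl (Nat.lt_of_le_of_lt (Nat.zero_le _) hch) ?_
      obtain ⟨hJR, hmu'⟩ := JR_SRound bd ch hl hch
      exact ih _ (by omega) (Or.inr hJR)
    · -- Red's turn
      have hac : ac = Color.r := ha
      subst hac
      rcases Nat.eq_zero_or_pos (totalChips ⟨bd, ch, Color.r⟩ Color.r) with h0 | h0
      · exact WinsWithS.elim _ (by simp) h0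
      · refine WinsWithS.theirs _ (by simp) h0 ?_
        intro s' hs
        have hs2 : Step (⟨bd, ch, Color.r⟩ : GState) s' := hs
        obtain ⟨hinv', hmu'⟩ := @red_step bd ch s' hlp hch hs2
        exact ih s' (by omega) hinv'

end SLSMain
/-- **Type I winning condition for Blue.**  Let the board be of type I (all
piles alternating, no long `b`-piles, at most one long `r`-pile), let Blue be
the active player with `m_b` blue chips, and let Red hold `n_r` red chips.
If `m_b > n_r ≥ 0` when Blue's turn starts, then Blue wins by applying
strategy `S` at every round. -/
theorem typeI_blue_wins (s : GState)
    (halt : Alternating s.board)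
    (hroom : chipCount s ≤ s.board.length)
    (hactive : s.active = Color.b)
    (hI₁ : longPiles Color.b s.board = [])
    (hI₂ : (longPiles Color.r s.board).length ≤ 1)
    (h : s.chips Color.r Color.r < s.chips Color.b Color.b) :
    WinsWithS Color.b s := by
  exact main_ind (mu s + 1) s (Nat.lt_succ_self _) (Or.inl ⟨hactive, hI₂, h⟩)
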